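/- For 0 ≤ s ≤ 1 let J_s = s |Φ_00⟩⟨Φ_00| + ((1−s)/4) I₄ be the Choi state of the qubit depolarising channel, and for 0 ≤ q ≤ 1 let K_q = ((1+q)/2) |Φ_00⟩⟨Φ_00| + ((1−q)/2) |Φ_01⟩⟨Φ_01| be the Choi state of the qubit dephasing channel. Then K_q lies in the convex hull of { (U ⊗ V) J_s (U ⊗ V)† : U, V ∈ U(2) } (an allowed operation maps the depolarising channel D^pol_s to the dephasing channel D^ph_q) if and only if s = 1; in particular, no nontrivial depolarising channel can be mapped to any dephasing channel by an allowed operation. -/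

import Mathlib

open Matrix Kronecker

noncomputable section

/-- The qubit discrete Weyl operators `W_nm = Σ_c (−1)^{mc} |n+c⟩⟨c|`. -/
def Wq (n m : ZMod 2) : Matrix (ZMod 2) (ZMod 2) ℂ :=
  Matrix.of fun r c => if r = n + c then (-1 : ℂ) ^ (m.val * c.val) else 0

/-- The qubit Bell basis vector `|Φ_nm⟩ = (I ⊗ W_nm)|Φ_00⟩`. -/
def bell (n m : ZMod 2) : ZMod 2 × ZMod 2 → ℂ :=
  fun p => ((Real.sqrt 2 : ℝ) : ℂ)⁻¹ * Wq n m p.2 p.1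

/-- The Bell projector `|Φ_nm⟩⟨Φ_nm|`. -/
def bellProj (n m : ZMod 2) : Matrix (ZMod 2 × ZMod 2) (ZMod 2 × ZMod 2) ℂ :=
  Matrix.of fun p q => bell n m p * (starRingEnd ℂ) (bell n m q)

/-- The set `{ (U ⊗ V) J (U ⊗ V)† : U, V ∈ U(2) }`. -/
def allowedSet (J : Matrix (ZMod 2 × ZMod 2) (ZMod 2 × ZMod 2) ℂ) :
    Set (Matrix (ZMod 2 × ZMod 2) (ZMod 2 × ZMod 2) ℂ) :=
  { K | ∃ U ∈ Matrix.unitaryGroup (ZMod 2) ℂ, ∃ V ∈ Matrix.unitaryGroup (ZMod 2) ℂ,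
      K = (U ⊗ₖ V) * J * (U ⊗ₖ V)ᴴ }

/-- The Choi state `J_s = s |Φ_00⟩⟨Φ_00| + ((1−s)/4) I₄` of the qubit depolarising
channel `D^pol_s`. -/
def Jdep (s : ℝ) : Matrix (ZMod 2 × ZMod 2) (ZMod 2 × ZMod 2) ℂ :=
  s • bellProj 0 0 + ((1 - s) / 4) • (1 : Matrix (ZMod 2 × ZMod 2) (ZMod 2 × ZMod 2) ℂ)

/-- The Choi state `K_q = ((1+q)/2)|Φ_00⟩⟨Φ_00| + ((1−q)/2)|Φ_01⟩⟨Φ_01|` of the qubit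
dephasing channel `D^ph_q`. -/
def Kdeph (q : ℝ) : Matrix (ZMod 2 × ZMod 2) (ZMod 2 × ZMod 2) ℂ :=
  ((1 + q) / 2) • bellProj 0 0 + ((1 - q) / 2) • bellProj 0 1

/-! ### Auxiliary lemmas -/

lemma zmod2_sum (f : ZMod 2 → ℂ) : ∑ x, f x = f 0 + f 1 := by
  rw [show (Finset.univ : Finset (ZMod 2)) = {0, 1} from rfl, Finset.sum_pair (by decide)]

lemma prod_sum (f : ZMod 2 × ZMod 2 → ℂ) :
    ∑ p, f p = f (0,0) + f (0,1) + f (1,0) + f (1,1) := by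
  rw [Fintype.sum_prod_type, zmod2_sum (fun a => ∑ b, f (a, b)), zmod2_sum, zmod2_sum]
  ring

lemma kron_conjT (A B : Matrix (ZMod 2) (ZMod 2) ℂ) : (A ⊗ₖ B)ᴴ = Aᴴ ⊗ₖ Bᴴ := by
  ext p q
  simp [conjTranspose_apply, kroneckerMap_apply, mul_comm]

/-- quadratic form of an outer product -/
lemma quad_outer {ι : Type*} [Fintype ι] (w x : ι → ℂ) :
    star x ⬝ᵥ ((Matrix.of fun p q => w p * (starRingEnd ℂ) (w q)) *ᵥ x) =
      (star x ⬝ᵥ w) * (starRingEnd ℂ) (star x ⬝ᵥ w) := by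
  simp only [dotProduct, Matrix.mulVec, Matrix.of_apply, Pi.star_apply, RCLike.star_def]
  rw [map_sum, Finset.sum_mul_sum]
  refine Finset.sum_congr rfl fun p _ => ?_
  rw [Finset.mul_sum]
  refine Finset.sum_congr rfl fun q _ => ?_
  simp only [_root_.map_mul, Complex.conj_conj]
  ring

/-- conjugation of an outer product -/
lemma conj_outer {ι : Type*} [Fintype ι] [DecidableEq ι] (A : Matrix ι ι ℂ) (u : ι → ℂ) :
    A * (Matrix.of fun p q => u p * (starRingEnd ℂ) (u q)) * Aᴴ =
      Matrix.of fun p q => (A *ᵥ u) p * (starRingEnd ℂ) ((A *ᵥ u) q) := by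
  ext p q
  simp only [Matrix.mul_apply, Matrix.of_apply, Matrix.conjTranspose_apply, Matrix.mulVec,
    dotProduct]
  rw [map_sum, Finset.sum_mul_sum]
  simp only [Finset.sum_mul]
  rw [Finset.sum_comm]
  refine Finset.sum_congr rfl fun i _ => ?_
  refine Finset.sum_congr rfl fun j _ => ?_
  simp only [_root_.map_mul, RCLike.star_def]
  ring

lemma vtest_apply (p : ZMod 2 × ZMod 2) :
    bell 1 0 p = if p.2 = 1 + p.1 then ((Real.sqrt 2 : ℝ) : ℂ)⁻¹ else 0 := by
  simp [bell, Wq, mul_ite]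

lemma bell0_apply (m : ZMod 2) (p : ZMod 2 × ZMod 2) :
    bell 0 m p =
      if p.2 = p.1 then ((Real.sqrt 2 : ℝ) : ℂ)⁻¹ * (-1 : ℂ) ^ (m.val * p.1.val) else 0 := by
  simp [bell, Wq, mul_ite]

def quadC : Matrix (ZMod 2 × ZMod 2) (ZMod 2 × ZMod 2) ℂ →ₗ[ℂ] ℂ where
  toFun M := star (bell 1 0) ⬝ᵥ M *ᵥ bell 1 0
  map_add' M N := by
    show star (bell 1 0) ⬝ᵥ (M + N) *ᵥ bell 1 0 = _
    rw [Matrix.add_mulVec, dotProduct_add]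
  map_smul' c M := by
    show star (bell 1 0) ⬝ᵥ (c • M) *ᵥ bell 1 0 = _
    rw [Matrix.smul_mulVec, dotProduct_smul]
    rfl

def gfun : Matrix (ZMod 2 × ZMod 2) (ZMod 2 × ZMod 2) ℂ →ₗ[ℝ] ℝ :=
  Complex.reLm.comp (quadC.restrictScalars ℝ)

lemma gfun_apply (M : Matrix (ZMod 2 × ZMod 2) (ZMod 2 × ZMod 2) ℂ) :
    gfun M = (star (bell 1 0) ⬝ᵥ M *ᵥ bell 1 0).re := rfl

lemma conj_sqrt2_inv :
    (starRingEnd ℂ) (((Real.sqrt 2 : ℝ) : ℂ))⁻¹ = (((Real.sqrt 2 : ℝ) : ℂ))⁻¹ := by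
  rw [← Complex.ofReal_inv, Complex.conj_ofReal, Complex.ofReal_inv]

lemma sqrt2_inv_sq :
    (((Real.sqrt 2 : ℝ) : ℂ))⁻¹ * (((Real.sqrt 2 : ℝ) : ℂ))⁻¹ = 1/2 := by
  rw [← mul_inv, ← Complex.ofReal_mul, Real.mul_self_sqrt (by norm_num : (0:ℝ) ≤ 2)]
  norm_num

lemma vtest_norm : star (bell 1 0) ⬝ᵥ bell 1 0 = 1 := by
  show ∑ p, star (bell 1 0) p * bell 1 0 p = 1
  rw [prod_sum]
  simp only [Pi.star_apply, vtest_apply, RCLike.star_def]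
  rw [if_neg (by decide : ¬((0:ZMod 2) = 1 + 0)), if_pos (by decide : ((1:ZMod 2) = 1 + 0)),
    if_pos (by decide : ((0:ZMod 2) = 1 + 1)), if_neg (by decide : ¬((1:ZMod 2) = 1 + 1))]
  rw [conj_sqrt2_inv]
  rw [map_zero, sqrt2_inv_sq]
  norm_num

lemma vtest_orth (m : ZMod 2) : star (bell 1 0) ⬝ᵥ bell 0 m = 0 := by
  show ∑ p, star (bell 1 0) p * bell 0 m p = 0
  rw [prod_sum]
  simp only [Pi.star_apply, vtest_apply, bell0_apply, RCLike.star_def]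
  rw [if_neg (by decide : ¬((0:ZMod 2) = 1 + 0)), if_neg (by decide : ¬((1:ZMod 2) = 1 + 1)),
    if_neg (by decide : ¬((1:ZMod 2) = 0)), if_neg (by decide : ¬((0:ZMod 2) = 1))]
  simp

lemma gfun_bellProj (m : ZMod 2) : gfun (bellProj 0 m) = 0 := by
  rw [gfun_apply]
  have h : bellProj 0 m = Matrix.of fun p q => bell 0 m p * (starRingEnd ℂ) (bell 0 m q) := rfl
  rw [h, quad_outer, vtest_orth]
  simp

lemma gfun_one : gfun 1 = 1 := by
  rw [gfun_apply, Matrix.one_mulVec, vtest_norm]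
  simp

lemma kron_unitary {U V : Matrix (ZMod 2) (ZMod 2) ℂ}
    (hU : U ∈ Matrix.unitaryGroup (ZMod 2) ℂ) (hV : V ∈ Matrix.unitaryGroup (ZMod 2) ℂ) :
    (U ⊗ₖ V) * (U ⊗ₖ V)ᴴ = 1 := by
  rw [kron_conjT, ← Matrix.mul_kronecker_mul]
  rw [Matrix.mem_unitaryGroup_iff] at hU hV
  rw [Matrix.star_eq_conjTranspose] at hU hV
  rw [hU, hV, Matrix.one_kronecker_one]

lemma gfun_allowed {s : ℝ} (hs0 : 0 ≤ s) {M : Matrix (ZMod 2 × ZMod 2) (ZMod 2 × ZMod 2) ℂ}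
    (hM : M ∈ allowedSet (Jdep s)) : (1 - s) / 4 ≤ gfun M := by
  obtain ⟨U, hU, V, hV, rfl⟩ := hM
  set A := U ⊗ₖ V with hA
  have hexp : A * Jdep s * Aᴴ
      = s • (A * bellProj 0 0 * Aᴴ) + ((1 - s)/4) • (1 : Matrix _ _ ℂ) := by
    rw [Jdep, Matrix.mul_add, Matrix.add_mul]
    rw [Matrix.mul_smul, Matrix.smul_mul, Matrix.mul_smul, Matrix.smul_mul]
    rw [Matrix.mul_one, kron_unitary hU hV]
  rw [hexp, map_add, LinearMap.map_smul, LinearMap.map_smul, gfun_one, smul_eq_mul,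
    smul_eq_mul, mul_one]
  have hpos : 0 ≤ gfun (A * bellProj 0 0 * Aᴴ) := by
    have h : bellProj 0 0 = Matrix.of fun p q => bell 0 0 p * (starRingEnd ℂ) (bell 0 0 q) := rfl
    rw [gfun_apply, h, conj_outer, quad_outer, Complex.mul_conj]
    simp only [Complex.ofReal_re]
    exact Complex.normSq_nonneg _
  nlinarith

lemma gfun_Kdeph (q : ℝ) : gfun (Kdeph q) = 0 := by
  rw [Kdeph, map_add, LinearMap.map_smul, LinearMap.map_smul, gfun_bellProj, gfun_bellProj]
  simp

lemma Z_unitary : Wq 0 1 ∈ Matrix.unitaryGroup (ZMod 2) ℂ := by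
  rw [Matrix.mem_unitaryGroup_iff, Matrix.star_eq_conjTranspose]
  ext i j
  rw [Matrix.mul_apply, zmod2_sum]
  rcases (by decide : ∀ x : ZMod 2, x = 0 ∨ x = 1) i with rfl | rfl <;>
    rcases (by decide : ∀ x : ZMod 2, x = 0 ∨ x = 1) j with rfl | rfl <;>
    simp [Wq, Matrix.conjTranspose_apply, Matrix.one_apply, show ((1:ZMod 2)).val = 1 from rfl] <;> norm_num

lemma Z_vec : ((1 : Matrix (ZMod 2) (ZMod 2) ℂ) ⊗ₖ Wq 0 1) *ᵥ bell 0 0 = bell 0 1 := by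
  funext p
  obtain ⟨a, b⟩ := p
  show ∑ q, ((1 : Matrix (ZMod 2) (ZMod 2) ℂ) ⊗ₖ Wq 0 1) (a,b) q * bell 0 0 q = _
  rw [prod_sum]
  rcases (by decide : ∀ x : ZMod 2, x = 0 ∨ x = 1) a with rfl | rfl <;>
    rcases (by decide : ∀ x : ZMod 2, x = 0 ∨ x = 1) b with rfl | rfl <;>
    simp [kroneckerMap_apply, bell, Wq, Matrix.one_apply] <;> ring

lemma Z_conj : ((1 : Matrix (ZMod 2) (ZMod 2) ℂ) ⊗ₖ Wq 0 1) * bellProj 0 0 *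
    ((1 : Matrix (ZMod 2) (ZMod 2) ℂ) ⊗ₖ Wq 0 1)ᴴ = bellProj 0 1 := by
  have h0 : bellProj 0 0 = Matrix.of fun p q => bell 0 0 p * (starRingEnd ℂ) (bell 0 0 q) := rfl
  rw [h0, conj_outer, Z_vec]
  rfl

lemma one_mem_allowed (J : Matrix (ZMod 2 × ZMod 2) (ZMod 2 × ZMod 2) ℂ) :
    J ∈ allowedSet J := by
  refine ⟨1, one_mem _, 1, one_mem _, ?_⟩
  rw [Matrix.one_kronecker_one, Matrix.conjTranspose_one, Matrix.one_mul, Matrix.mul_one]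

lemma Jdep_one : Jdep 1 = bellProj 0 0 := by
  rw [Jdep]
  norm_num

/-- An allowed operation maps the qubit depolarising channel `D^pol_s` to the
dephasing channel `D^ph_q` if and only if `s = 1`: no nontrivial depolarising
channel can be mapped to any dephasing channel. -/
theorem depolarising_to_dephasing (s q : ℝ)
    (hs0 : 0 ≤ s) (hs1 : s ≤ 1) (hq0 : 0 ≤ q) (hq1 : q ≤ 1) :
    Kdeph q ∈ convexHull ℝ (allowedSet (Jdep s)) ↔ s = 1 := by
  constructor
  · intro hmem
    have hsub : convexHull ℝ (allowedSet (Jdep s)) ⊆ {M | (1 - s)/4 ≤ gfun M} :=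
      convexHull_min (fun M hM => gfun_allowed hs0 hM)
        (convex_halfSpace_ge (LinearMap.isLinear gfun) _)
    have hle := hsub hmem
    rw [Set.mem_setOf_eq, gfun_Kdeph] at hle
    linarith
  · rintro rfl
    rw [Jdep_one]
    have h1 : bellProj 0 0 ∈ allowedSet (bellProj 0 0) := one_mem_allowed _
    have h2 : bellProj 0 1 ∈ allowedSet (bellProj 0 0) :=
      ⟨1, one_mem _, Wq 0 1, Z_unitary, Z_conj.symm⟩
    have hc := convex_convexHull ℝ (allowedSet (bellProj 0 0))
    exact hc (subset_convexHull ℝ _ h1) (subset_convexHull ℝ _ h2)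
      (by linarith : (0:ℝ) ≤ (1 + q)/2) (by linarith : (0:ℝ) ≤ (1 - q)/2)
      (by ring : (1 + q)/2 + (1 - q)/2 = 1)

end
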